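/- Let S be a numerical semigroup on a compound sequence. Then the Frobenius number of S (the largest positive integer not in S) equals −n_0 + Σ_{j=1}^p n_j(a_j − 1). -/

import Mathlib

def Nv (a b : ℕ → ℕ) (p j : ℕ) : ℕ :=
  (∏ i ∈ Finset.Icc 1 j, b i) * ∏ i ∈ Finset.Icc (j+1) p, a i

lemma Nv_succ (a b : ℕ → ℕ) (p j : ℕ) (hj : j ≤ p) :
    Nv a b (p+1) j = a (p+1) * Nv a b p j := by
  unfold Nv
  rw [Finset.prod_Icc_succ_top (by omega : j+1 ≤ p+1)]
  ring

lemma Nv_top (a b : ℕ → ℕ) (p : ℕ) : Nv a b p p = ∏ i ∈ Finset.Icc 1 p, b i := by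
  unfold Nv
  rw [show Finset.Icc (p+1) p = ∅ from Finset.Icc_eq_empty (by omega), Finset.prod_empty, mul_one]

lemma Nv_top_coprime (a b : ℕ → ℕ) (p : ℕ)
    (hab : ∀ j, 1 ≤ j → j ≤ p → Nat.gcd (a p) (b j) = 1) :
    Nat.Coprime (a p) (Nv a b p p) := by
  rw [Nv_top]
  exact Nat.Coprime.prod_right fun j hj => hab j (Finset.mem_Icc.mp hj).1 (Finset.mem_Icc.mp hj).2

lemma sum_range_split (p : ℕ) (f : ℕ → ℤ) :
    ∑ j ∈ Finset.range (p+1), f j = f 0 + ∑ j ∈ Finset.Icc 1 p, f j := by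
  rw [Finset.range_eq_Ico, Finset.sum_eq_sum_Ico_succ_bot (Nat.succ_pos p), Nat.succ_eq_add_one, Finset.Ico_add_one_right_eq_Icc]

lemma cs_exists (a b : ℕ → ℕ) : ∀ p : ℕ,
    (∀ i, 1 ≤ i → i ≤ p → 1 ≤ a i) →
    (∀ i j, 1 ≤ j → j ≤ i → i ≤ p → Nat.gcd (a i) (b j) = 1) →
    ∀ m : ℤ, ∃ (k : ℤ) (x : ℕ → ℕ),
      (∀ j, 1 ≤ j → j ≤ p → x j < a j) ∧
      m = k * Nv a b p 0 + ∑ j ∈ Finset.Icc 1 p, (x j : ℤ) * Nv a b p j := by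
  intro p
  induction p with
  | zero =>
    intro _ _ m
    refine ⟨m, fun _ => 0, fun j hj hj' => by omega, ?_⟩
    simp [Nv]
  | succ p ih =>
    intro ha hab m
    have hP : 0 < (a (p+1) : ℤ) := by exact_mod_cast ha (p+1) (by omega) le_rfl
    have hcop : IsCoprime ((a (p+1) : ℤ)) (Nv a b (p+1) (p+1) : ℤ) :=
      Nat.isCoprime_iff_coprime.mpr
        (Nv_top_coprime a b (p+1) (fun j hj hj' => hab (p+1) j hj hj' le_rfl))
    obtain ⟨u, v, huv⟩ := hcop
    set P : ℤ := (a (p+1) : ℤ)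
    set Np1 : ℤ := (Nv a b (p+1) (p+1) : ℤ)
    set c : ℤ := (v * m) % P with hc
    have hc0 : 0 ≤ c := Int.emod_nonneg _ (by omega)
    have hcP : c < P := Int.emod_lt_of_pos _ hP
    have hdvd : P ∣ m - c * Np1 := by
      have h1 : c ≡ v * m [ZMOD P] := Int.emod_emod_of_dvd (v * m) dvd_rfl
      have h2 : m - c * Np1 ≡ m - v * m * Np1 [ZMOD P] :=
        (Int.ModEq.refl m).sub (h1.mul_right Np1)
      have h3 : m - v * m * Np1 = m * u * P := by linear_combination (-m) * huv
      have h4 : P ∣ (m - v * m * Np1) - (m - c * Np1) := h2.dvd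
      have h5 : P ∣ m - v * m * Np1 := h3 ▸ dvd_mul_left P (m * u)
      simpa [sub_sub_cancel] using dvd_sub h5 h4
    obtain ⟨m', hm'⟩ := hdvd
    obtain ⟨k, x', hx', hrep⟩ := ih (fun i h1 h2 => ha i h1 (by omega))
      (fun i j h1 h2 h3 => hab i j h1 h2 (by omega)) m'
    refine ⟨k, fun j => if j = p+1 then c.toNat else x' j, ?_, ?_⟩
    · intro j hj hj'
      by_cases hcase : j = p + 1
      · subst hcase
        show (if p+1 = p+1 then c.toNat else x' (p+1)) < a (p+1)
        rw [if_pos rfl]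
        have hPd : P = (a (p+1) : ℤ) := rfl
        omega
      · show (if j = p + 1 then c.toNat else x' j) < a j
        rw [if_neg hcase]
        exact hx' j hj (by omega)
    · rw [Finset.sum_Icc_succ_top (by omega : 1 ≤ p+1)]
      simp only [if_pos rfl]
      have hrw : ∑ j ∈ Finset.Icc 1 p, ((if j = p+1 then c.toNat else x' j : ℕ) : ℤ) * (Nv a b (p+1) j : ℤ)
          = P * ∑ j ∈ Finset.Icc 1 p, (x' j : ℤ) * (Nv a b p j : ℤ) := by
        rw [Finset.mul_sum]
        refine Finset.sum_congr rfl fun j hj => ?_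
        have hj' := Finset.mem_Icc.mp hj
        rw [if_neg (by omega), Nv_succ a b p j (by omega)]
        push_cast
        ring
      rw [hrw, Nv_succ a b p 0 (Nat.zero_le p)]
      have hmm : m = P * m' + c * Np1 := by linarith
      push_cast
      rw [Int.toNat_of_nonneg hc0,
        show ((Nv a b (p+1) (p+1) : ℕ) : ℤ) = Np1 from rfl,
        show ((a (p+1) : ℕ) : ℤ) = P from rfl, hmm, hrep]
      ring

lemma cs_main (a b : ℕ → ℕ) : ∀ p : ℕ,
    (∀ i, 1 ≤ i → i ≤ p → 1 ≤ a i) →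
    (∀ i j, 1 ≤ j → j ≤ i → i ≤ p → Nat.gcd (a i) (b j) = 1) →
    ∀ (m k : ℤ) (x : ℕ → ℕ),
      (∀ j, 1 ≤ j → j ≤ p → x j < a j) →
      m = k * Nv a b p 0 + ∑ j ∈ Finset.Icc 1 p, (x j : ℤ) * Nv a b p j →
      ((∃ z : ℕ → ℕ, m = ∑ j ∈ Finset.range (p+1), (z j : ℤ) * Nv a b p j) ↔ 0 ≤ k) := by
  intro p
  induction p with
  | zero =>
    intro _ _ m k x _ hm
    simp only [show Finset.Icc 1 0 = ∅ from rfl, Finset.sum_empty, add_zero] at hm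
    have h0 : Nv a b 0 0 = 1 := by simp [Nv]
    rw [h0] at hm
    push_cast at hm
    constructor
    · rintro ⟨z, hz⟩
      rw [Finset.sum_range_one, h0] at hz
      push_cast at hz
      omega
    · intro hk
      exact ⟨fun _ => k.toNat, by rw [Finset.sum_range_one, h0]; push_cast; omega⟩
  | succ p ih =>
    intro ha hab m k x hx hm
    have hP : 0 < (a (p+1) : ℤ) := by exact_mod_cast ha (p+1) (by omega) le_rfl
    set P : ℤ := (a (p+1) : ℤ) with hPdef
    set Np1 : ℤ := (Nv a b (p+1) (p+1) : ℤ) with hNp1def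
    constructor
    · rintro ⟨z, hz⟩
      -- split off top terms
      rw [Finset.sum_range_succ] at hz
      rw [Finset.sum_Icc_succ_top (by omega : 1 ≤ p+1)] at hm
      -- divisibility of lower N's by P
      have hNd : ∀ j, j ≤ p → (Nv a b (p+1) j : ℤ) = P * (Nv a b p j : ℤ) := by
        intro j hj
        rw [Nv_succ a b p j hj]
        push_cast
        ring
      -- sums over Icc 1 p and range (p+1) rewritten
      have hsum1 : ∑ j ∈ Finset.Icc 1 p, (x j : ℤ) * (Nv a b (p+1) j : ℤ)
          = P * ∑ j ∈ Finset.Icc 1 p, (x j : ℤ) * (Nv a b p j : ℤ) := by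
        rw [Finset.mul_sum]
        refine Finset.sum_congr rfl fun j hj => ?_
        rw [hNd j (Finset.mem_Icc.mp hj).2]; ring
      have hsum2 : ∑ j ∈ Finset.range (p+1), (z j : ℤ) * (Nv a b (p+1) j : ℤ)
          = P * ∑ j ∈ Finset.range (p+1), (z j : ℤ) * (Nv a b p j : ℤ) := by
        rw [Finset.mul_sum]
        refine Finset.sum_congr rfl fun j hj => ?_
        have hj' : j ≤ p := Nat.lt_succ_iff.mp (Finset.mem_range.mp hj)
        rw [hNd j hj']; ring
      rw [hNd 0 (Nat.zero_le p), hsum1] at hm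
      rw [hsum2] at hz
      -- coprimality
      have hcop : IsCoprime P Np1 :=
        Nat.isCoprime_iff_coprime.mpr
          (Nv_top_coprime a b (p+1) (fun j hj hj' => hab (p+1) j hj hj' le_rfl))
      -- P divides (z(p+1) - x(p+1)) * Np1
      have hdv : P ∣ ((z (p+1) : ℤ) - (x (p+1) : ℤ)) * Np1 := by
        have : ((z (p+1) : ℤ) - (x (p+1) : ℤ)) * Np1
            = (P * (k * ↑(Nv a b p 0) + ∑ j ∈ Finset.Icc 1 p, (x j : ℤ) * ↑(Nv a b p j))
               - P * ∑ j ∈ Finset.range (p+1), (z j : ℤ) * ↑(Nv a b p j)) := by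
          linear_combination hm - hz
        rw [this]
        exact dvd_sub (Dvd.intro _ rfl) (Dvd.intro _ rfl)
      have hdz : P ∣ ((z (p+1) : ℤ) - (x (p+1) : ℤ)) := hcop.dvd_of_dvd_mul_right hdv
      obtain ⟨s, hs⟩ := hdz
      have hxlt : (x (p+1) : ℤ) < P := by
        rw [hPdef]
        exact_mod_cast hx (p+1) (by omega) le_rfl
      have hs0 : 0 ≤ s := by nlinarith [Int.ofNat_nonneg (z (p+1))]
      -- m' at level p
      set m' : ℤ := k * ↑(Nv a b p 0) + ∑ j ∈ Finset.Icc 1 p, (x j : ℤ) * ↑(Nv a b p j) with hm'def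
      -- z' representation of m'
      have hbN : P * Np1 = (b (p+1) : ℤ) * (Nv a b p p : ℤ) * P := by
        rw [hNp1def, Nv_top, Nv_top, Finset.prod_Icc_succ_top (by omega : 1 ≤ p+1)]
        push_cast
        ring
      have key : P * m' = P * (∑ j ∈ Finset.range (p+1), (z j : ℤ) * ↑(Nv a b p j)
          + s * (b (p+1) : ℤ) * (Nv a b p p : ℤ)) := by
        have e1 : P * m' = m - (x (p+1) : ℤ) * Np1 := by rw [hm'def]; linarith
        rw [e1, hz]
        have e2 : ((z (p+1) : ℤ)) * Np1 - (x (p+1) : ℤ) * Np1 = P * s * Np1 := by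
          linear_combination Np1 * hs
        nlinarith [e2, hbN]
      have hm'eq : m' = ∑ j ∈ Finset.range (p+1), (z j : ℤ) * ↑(Nv a b p j)
          + s * (b (p+1) : ℤ) * (Nv a b p p : ℤ) :=
        mul_left_cancel₀ (by positivity) key
      -- build z' : ℕ → ℕ
      have hrep' : ∃ z' : ℕ → ℕ, m' = ∑ j ∈ Finset.range (p+1), (z' j : ℤ) * ↑(Nv a b p j) := by
        refine ⟨fun j => if j = p then z p + s.toNat * b (p+1) else z j, ?_⟩
        show m' = ∑ j ∈ Finset.range (p+1),
          ((if j = p then z p + s.toNat * b (p+1) else z j : ℕ) : ℤ) * ↑(Nv a b p j)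
        rw [Finset.sum_range_succ] at hm'eq
        rw [Finset.sum_range_succ]
        have hcong : ∑ j ∈ Finset.range p, ((if j = p then z p + s.toNat * b (p+1) else z j : ℕ) : ℤ) * ↑(Nv a b p j)
            = ∑ j ∈ Finset.range p, (z j : ℤ) * ↑(Nv a b p j) := by
          refine Finset.sum_congr rfl fun j hj => ?_
          rw [if_neg (by have := Finset.mem_range.mp hj; omega)]
        rw [hcong, if_pos rfl, hm'eq]
        have : ((s.toNat : ℤ)) = s := Int.toNat_of_nonneg hs0
        push_cast
        rw [this]
        ring
      -- apply IH
      obtain ⟨z', hz'⟩ := hrep'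
      have := (ih (fun i h1 h2 => ha i h1 (by omega))
        (fun i j h1 h2 h3 => hab i j h1 h2 (by omega)) m' k x
        (fun j hj hj' => hx j hj (by omega)) hm'def).mp ⟨z', hz'⟩
      exact this
    · intro hk
      refine ⟨fun j => if j = 0 then k.toNat else x j, ?_⟩
      rw [sum_range_split]
      show m = ((if (0:ℕ) = 0 then k.toNat else x 0 : ℕ) : ℤ) * ↑(Nv a b (p+1) 0)
        + ∑ j ∈ Finset.Icc 1 (p+1), ((if j = 0 then k.toNat else x j : ℕ) : ℤ) * ↑(Nv a b (p+1) j)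
      rw [if_pos rfl]
      have hcong : ∑ j ∈ Finset.Icc 1 (p+1), ((if j = 0 then k.toNat else x j : ℕ) : ℤ) * ↑(Nv a b (p+1) j)
          = ∑ j ∈ Finset.Icc 1 (p+1), (x j : ℤ) * ↑(Nv a b (p+1) j) := by
        refine Finset.sum_congr rfl fun j hj => ?_
        rw [if_neg (by have := (Finset.mem_Icc.mp hj).1; omega)]
      rw [hcong, Int.toNat_of_nonneg hk]
      exact hm

lemma Nv_def (a b : ℕ → ℕ) (p j : ℕ) :
    Nv a b p j = (∏ i ∈ Finset.Icc 1 j, b i) * ∏ i ∈ Finset.Icc (j+1) p, a i := rfl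

theorem stmt17 (p : ℕ) (hp : 1 ≤ p) (a b : ℕ → ℕ)
    (ha : ∀ i, 1 ≤ i → i ≤ p → 2 ≤ a i ∧ a i < b i)
    (hab : ∀ i j, 1 ≤ j → j ≤ i → i ≤ p → Nat.gcd (a i) (b j) = 1)
    (n : ℕ → ℕ)
    (hn : ∀ i, i ≤ p → n i = (∏ j ∈ Finset.Icc 1 i, b j) * ∏ j ∈ Finset.Icc (i+1) p, a j) :
    IsGreatest {m : ℕ | ¬∃ x : ℕ → ℕ, ∑ j ∈ Finset.range (p+1), x j * n j = m}
      ((∑ j ∈ Finset.Icc 1 p, n j * (a j - 1)) - n 0) := by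
  have ha1 : ∀ i, 1 ≤ i → i ≤ p → 1 ≤ a i := fun i h1 h2 => by have := (ha i h1 h2).1; omega
  have hnN : ∀ i, i ≤ p → n i = Nv a b p i := fun i h => by rw [hn i h, Nv_def]
  set T : ℕ := ∑ j ∈ Finset.Icc 1 p, n j * (a j - 1) with hT
  -- n 0 ≤ n 1
  have h01 : n 0 ≤ n 1 := by
    rw [hn 0 (by omega), hn 1 hp]
    simp only [show Finset.Icc 1 0 = ∅ from rfl, Finset.prod_empty, one_mul,
      Finset.Icc_self, Finset.prod_singleton]
    have hsplit : ∏ i ∈ Finset.Icc 1 p, a i = a 1 * ∏ i ∈ Finset.Icc 2 p, a i := by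
      rw [← Finset.Ico_add_one_right_eq_Icc, Finset.prod_eq_prod_Ico_succ_bot (by omega : 1 < p + 1),
        Finset.Ico_add_one_right_eq_Icc]
    rw [hsplit]
    exact Nat.mul_le_mul_right _ (le_of_lt (ha 1 le_rfl hp).2)
  have hn0T : n 0 ≤ T := by
    have h1mem : 1 ∈ Finset.Icc 1 p := Finset.mem_Icc.mpr ⟨le_rfl, hp⟩
    have := Finset.single_le_sum (f := fun j => n j * (a j - 1))
      (fun j _ => Nat.zero_le _) h1mem
    have ha1' := (ha 1 le_rfl hp).1
    calc n 0 ≤ n 1 := h01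
    _ ≤ n 1 * (a 1 - 1) := Nat.le_mul_of_pos_right _ (by omega)
    _ ≤ T := this
  -- canonical form of F over ℤ
  have hTZ : (T : ℤ) = ∑ j ∈ Finset.Icc 1 p, ((a j - 1 : ℕ) : ℤ) * (Nv a b p j : ℤ) := by
    rw [hT]
    push_cast
    refine Finset.sum_congr rfl fun j hj => ?_
    rw [hnN j (Finset.mem_Icc.mp hj).2]
    ring
  have hFcan : ((T - n 0 : ℕ) : ℤ) = (-1) * (Nv a b p 0 : ℤ)
      + ∑ j ∈ Finset.Icc 1 p, ((a j - 1 : ℕ) : ℤ) * (Nv a b p j : ℤ) := by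
    rw [Nat.cast_sub hn0T, hTZ, hnN 0 (by omega)]
    ring
  have hxcan : ∀ j, 1 ≤ j → j ≤ p → (fun j => a j - 1) j < a j := by
    intro j h1 h2
    have := (ha j h1 h2).1
    simp only
    omega
  constructor
  · -- F not representable
    rintro ⟨z, hz⟩
    have hzZ : ((T - n 0 : ℕ) : ℤ)
        = ∑ j ∈ Finset.range (p+1), (z j : ℤ) * (Nv a b p j : ℤ) := by
      rw [← hz]
      push_cast
      refine Finset.sum_congr rfl fun j hj => ?_
      rw [hnN j (by have := Finset.mem_range.mp hj; omega)]
    have := (cs_main a b p ha1 hab _ (-1) (fun j => a j - 1) hxcan hFcan).mp ⟨z, hzZ⟩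
    omega
  · -- upper bound
    intro m hm
    by_contra hlt
    push_neg at hlt
    obtain ⟨k, x, hxlt, hcan⟩ := cs_exists a b p ha1 hab (m : ℤ)
    have hsumle : ∑ j ∈ Finset.Icc 1 p, (x j : ℤ) * (Nv a b p j : ℤ) ≤ (T : ℤ) := by
      rw [hTZ]
      refine Finset.sum_le_sum fun j hj => ?_
      obtain ⟨hj1, hj2⟩ := Finset.mem_Icc.mp hj
      have hxj : (x j : ℤ) ≤ ((a j - 1 : ℕ) : ℤ) := by
        exact_mod_cast (by have := hxlt j hj1 hj2; omega : x j ≤ a j - 1)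
      exact mul_le_mul_of_nonneg_right hxj (Nat.cast_nonneg _)
    have hN0pos : 0 < (Nv a b p 0 : ℤ) := by
      have : 0 < Nv a b p 0 := by
        rw [Nv_def]
        simp only [show Finset.Icc 1 0 = ∅ from rfl, Finset.prod_empty, one_mul]
        exact Finset.prod_pos fun i hi =>
          ha1 i (Finset.mem_Icc.mp hi).1 (Finset.mem_Icc.mp hi).2
      exact_mod_cast this
    have hmF : ((T - n 0 : ℕ) : ℤ) < (m : ℤ) := by exact_mod_cast hlt
    have hn0Z : (n 0 : ℤ) = (Nv a b p 0 : ℤ) := by rw [hnN 0 (by omega)]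
    have hklb : -(Nv a b p 0 : ℤ) < k * (Nv a b p 0 : ℤ) := by
      rw [Nat.cast_sub hn0T] at hmF
      linarith [hcan, hsumle, hmF, hn0Z]
    have hk : 0 ≤ k := by nlinarith
    obtain ⟨z, hz⟩ := (cs_main a b p ha1 hab (m : ℤ) k x hxlt hcan).mpr hk
    refine hm ⟨z, ?_⟩
    have : ((∑ j ∈ Finset.range (p+1), z j * n j : ℕ) : ℤ) = (m : ℤ) := by
      push_cast
      rw [hz]
      refine Finset.sum_congr rfl fun j hj => ?_
      rw [hnN j (by have := Finset.mem_range.mp hj; omega)]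
    exact_mod_cast this
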